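/- Let (R_i)_{i=1}^N be independent, identically distributed integrable real random variables with common mean b = E[R_1], and let π_M, π_L ∈ ℝ satisfy π_M·π_L ≥ 0 (same sign) and |π_M| ≤ |π_L|. Set X = ∏_{i=1}^N (1 + π_M(R_i − b)) and Y = ∏_{i=1}^N (1 + π_L(R_i − b)). Then E[X] = E[Y] and E[(X−K)⁺] ≤ E[(Y−K)⁺] for every K ∈ ℝ; that is, X ≤_C Y. -/

import Mathlib

open MeasureTheory ProbabilityTheory Set Finset

/-- One-variable convex-order inequality for affine transforms. -/
lemma aux_one_var {ν : Measure ℝ} [IsProbabilityMeasure ν]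
    (hid : Integrable id ν) {b : ℝ} (hmean : (∫ s, s ∂ν) = b)
    {πM πL : ℝ} (hsign : 0 ≤ πM * πL) (habs : |πM| ≤ |πL|) (a K : ℝ) :
    ∫ s, max (a * (1 + πM * (s - b)) - K) 0 ∂ν
      ≤ ∫ s, max (a * (1 + πL * (s - b)) - K) 0 ∂ν := by
  have hlin : ∀ (c π : ℝ), Integrable (fun s : ℝ => c * (1 + π * (s - b)) - K) ν := by
    intro c π
    have h1 : Integrable (fun s : ℝ => (c * π) * s + (c - c * π * b - K)) ν :=
      (hid.const_mul (c * π)).add (integrable_const _)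
    exact h1.congr (Filter.Eventually.of_forall fun s => by ring)
  have hmax : ∀ (c π : ℝ), Integrable (fun s : ℝ => max (c * (1 + π * (s - b)) - K) 0) ν :=
    fun c π => (hlin c π).pos_part
  by_cases hL : πL = 0
  · have hM : πM = 0 := by
      rw [hL] at habs; simpa using abs_eq_zero.mp (le_antisymm (by simpa using habs) (abs_nonneg _))
    rw [hL, hM]
  · set l : ℝ := πM / πL with hl
    have hl0 : 0 ≤ l := by
      have : l = (πM * πL) / (πL * πL) := by rw [hl]; field_simp
      rw [this]; exact div_nonneg hsign (mul_self_nonneg _)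
    have hl1 : l ≤ 1 := by
      have : |l| ≤ 1 := by
        rw [hl, abs_div]
        exact div_le_one_of_le₀ habs (abs_nonneg _)
      exact (le_abs_self l).trans this
    have hMeq : πM = l * πL := by rw [hl]; field_simp
    -- pointwise convexity bound
    have hpt : ∀ s : ℝ, max (a * (1 + πM * (s - b)) - K) 0
        ≤ l * max (a * (1 + πL * (s - b)) - K) 0 + (1 - l) * max (a - K) 0 := by
      intro s
      have hdecomp : a * (1 + πM * (s - b)) - K
          = l * (a * (1 + πL * (s - b)) - K) + (1 - l) * (a - K) := by
        rw [hMeq]; ring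
      refine max_le ?_ ?_
      · rw [hdecomp]
        have h1 : a * (1 + πL * (s - b)) - K ≤ max (a * (1 + πL * (s - b)) - K) 0 :=
          le_max_left _ _
        have h2 : a - K ≤ max (a - K) 0 := le_max_left _ _
        nlinarith
      · have := mul_nonneg hl0 (le_max_right (a * (1 + πL * (s - b)) - K) 0)
        have := mul_nonneg (by linarith : (0:ℝ) ≤ 1 - l) (le_max_right (a - K) 0)
        linarith
    have hIL : max (a - K) 0 ≤ ∫ s, max (a * (1 + πL * (s - b)) - K) 0 ∂ν := by
      have hsub : (∫ s, (a * (1 + πL * (s - b)) - K) ∂ν) = a - K := by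
        have h1 : (∫ s, (a * (1 + πL * (s - b)) - K) ∂ν)
            = ∫ s, ((a * πL) * s + (a - a * πL * b - K)) ∂ν := by
          apply integral_congr_ae
          exact Filter.Eventually.of_forall fun s => by ring
        have hid' : Integrable (fun s : ℝ => s) ν := hid
        rw [h1, integral_add (hid'.const_mul (a * πL)) (integrable_const _),
          integral_const_mul, hmean, integral_const]
        simp [measure_univ]
        ring
      refine max_le ?_ (integral_nonneg fun s => le_max_right _ _)
      calc a - K = ∫ s, (a * (1 + πL * (s - b)) - K) ∂ν := hsub.symm
        _ ≤ ∫ s, max (a * (1 + πL * (s - b)) - K) 0 ∂ν :=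
            integral_mono (hlin a πL) (hmax a πL) fun s => le_max_left _ _
    calc ∫ s, max (a * (1 + πM * (s - b)) - K) 0 ∂ν
        ≤ ∫ s, (l * max (a * (1 + πL * (s - b)) - K) 0 + (1 - l) * max (a - K) 0) ∂ν :=
          integral_mono (hmax a πM)
            (((hmax a πL).const_mul l).add (integrable_const _)) hpt
      _ = l * (∫ s, max (a * (1 + πL * (s - b)) - K) 0 ∂ν) + (1 - l) * max (a - K) 0 := by
          rw [integral_add ((hmax a πL).const_mul l) (integrable_const _),
            integral_const_mul, integral_const]
          simp [measure_univ]
      _ ≤ l * (∫ s, max (a * (1 + πL * (s - b)) - K) 0 ∂ν)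
            + (1 - l) * (∫ s, max (a * (1 + πL * (s - b)) - K) 0 ∂ν) := by
          have := mul_le_mul_of_nonneg_left hIL (by linarith : (0:ℝ) ≤ 1 - l)
          linarith
      _ = ∫ s, max (a * (1 + πL * (s - b)) - K) 0 ∂ν := by ring

/-- Replacing the factor's parameter `πM` by `πL`, with an independent coefficient. -/
lemma aux_step1 {Ω : Type*} [MeasureSpace Ω] [IsProbabilityMeasure (volume : Measure Ω)]
    {A S : Ω → ℝ} (hA : Measurable A) (hS : Measurable S)
    (hAi : Integrable A) (hSi : Integrable S)
    (hind : IndepFun A S volume) {b : ℝ} (hmean : (∫ ω, S ω) = b)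
    {πM πL : ℝ} (hsign : 0 ≤ πM * πL) (habs : |πM| ≤ |πL|) (K : ℝ) :
    ∫ ω, max (A ω * (1 + πM * (S ω - b)) - K) 0
      ≤ ∫ ω, max (A ω * (1 + πL * (S ω - b)) - K) 0 := by
  set μA : Measure ℝ := (volume : Measure Ω).map A with hμA
  set ν : Measure ℝ := (volume : Measure Ω).map S with hν
  haveI : IsProbabilityMeasure μA := Measure.isProbabilityMeasure_map hA.aemeasurable
  haveI : IsProbabilityMeasure ν := Measure.isProbabilityMeasure_map hS.aemeasurable
  have hidν : Integrable id ν :=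
    (integrable_map_measure aestronglyMeasurable_id hS.aemeasurable).mpr hSi
  have hidA : Integrable id μA :=
    (integrable_map_measure aestronglyMeasurable_id hA.aemeasurable).mpr hAi
  have hνmean : (∫ s, s ∂ν) = b := by
    rw [hν]
    exact (integral_map hS.aemeasurable aestronglyMeasurable_id).trans hmean
  have hpair : Measurable fun ω => (A ω, S ω) := hA.prodMk hS
  have hmapAS : (volume : Measure Ω).map (fun ω => (A ω, S ω)) = μA.prod ν :=
    (indepFun_iff_map_prod_eq_prod_map_map hA.aemeasurable hS.aemeasurable).mp hind
  set H : ℝ → ℝ × ℝ → ℝ := fun π p => max (p.1 * (1 + π * (p.2 - b)) - K) 0 with hH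
  have hHm : ∀ π, Measurable (H π) := by
    intro π
    apply Measurable.max _ measurable_const
    exact (measurable_fst.mul
      ((measurable_const.add (((measurable_snd.sub measurable_const)).const_mul π)))).sub
      measurable_const
  have hHi : ∀ π, Integrable (H π) (μA.prod ν) := by
    intro π
    have hg1 : Integrable (fun s : ℝ => 1 + |π| * |s - b|) ν := by
      have : Integrable (fun s : ℝ => s - b) ν := hidν.sub (integrable_const b)
      exact (integrable_const 1).add (this.abs.const_mul _)
    have hg : Integrable (fun p : ℝ × ℝ => |p.1| * (1 + |π| * |p.2 - b|) + |K|)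
        (μA.prod ν) := (Integrable.mul_prod hidA.abs hg1).add (integrable_const _)
    refine hg.mono' (hHm π).aestronglyMeasurable (Filter.Eventually.of_forall fun p => ?_)
    have h1 : |H π p| ≤ |p.1 * (1 + π * (p.2 - b)) - K| := by
      rw [hH]
      simp only [abs_of_nonneg (le_max_right (p.1 * (1 + π * (p.2 - b)) - K) 0)]
      exact max_le (le_abs_self _) (abs_nonneg _)
    have h2 : |p.1 * (1 + π * (p.2 - b)) - K| ≤ |p.1 * (1 + π * (p.2 - b))| + |K| :=
      abs_sub _ _
    have h3 : |p.1 * (1 + π * (p.2 - b))| ≤ |p.1| * (1 + |π| * |p.2 - b|) := by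
      rw [abs_mul]
      refine mul_le_mul_of_nonneg_left ?_ (abs_nonneg _)
      calc |1 + π * (p.2 - b)| ≤ |(1:ℝ)| + |π * (p.2 - b)| := abs_add_le _ _
        _ = 1 + |π| * |p.2 - b| := by rw [abs_one, abs_mul]
    have : |H π p| ≤ |p.1| * (1 + |π| * |p.2 - b|) + |K| := by linarith
    simpa [Real.norm_eq_abs] using this
  have e1 : ∀ π, (∫ ω, max (A ω * (1 + π * (S ω - b)) - K) 0)
      = ∫ a, ∫ s, H π (a, s) ∂ν ∂μA := by
    intro π
    calc (∫ ω, max (A ω * (1 + π * (S ω - b)) - K) 0)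
        = ∫ p, H π p ∂((volume : Measure Ω).map (fun ω => (A ω, S ω))) :=
          (integral_map hpair.aemeasurable (hHm π).aestronglyMeasurable).symm
      _ = ∫ p, H π p ∂(μA.prod ν) := by rw [hmapAS]
      _ = ∫ a, ∫ s, H π (a, s) ∂ν ∂μA := integral_prod _ (hHi π)
  rw [e1 πM, e1 πL]
  exact integral_mono (hHi πM).integral_prod_left (hHi πL).integral_prod_left
    fun a => aux_one_var hidν hνmean hsign habs a K

/-- Replacing the coefficient `A` by `B`, with an independent factor. -/
lemma aux_step2 {Ω : Type*} [MeasureSpace Ω] [IsProbabilityMeasure (volume : Measure Ω)]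
    {A B S : Ω → ℝ} (hA : Measurable A) (hB : Measurable B) (hS : Measurable S)
    (hAi : Integrable A) (hBi : Integrable B) (hSi : Integrable S)
    (hindA : IndepFun A S volume) (hindB : IndepFun B S volume)
    (hIH : ∀ c K : ℝ, (∫ ω, max (A ω * c - K) 0) ≤ ∫ ω, max (B ω * c - K) 0)
    (π b K : ℝ) :
    ∫ ω, max (A ω * (1 + π * (S ω - b)) - K) 0
      ≤ ∫ ω, max (B ω * (1 + π * (S ω - b)) - K) 0 := by
  set μA : Measure ℝ := (volume : Measure Ω).map A with hμA
  set μB : Measure ℝ := (volume : Measure Ω).map B with hμB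
  set ν : Measure ℝ := (volume : Measure Ω).map S with hν
  haveI : IsProbabilityMeasure μA := Measure.isProbabilityMeasure_map hA.aemeasurable
  haveI : IsProbabilityMeasure μB := Measure.isProbabilityMeasure_map hB.aemeasurable
  haveI : IsProbabilityMeasure ν := Measure.isProbabilityMeasure_map hS.aemeasurable
  have hidν : Integrable id ν :=
    (integrable_map_measure aestronglyMeasurable_id hS.aemeasurable).mpr hSi
  have hidA : Integrable id μA :=
    (integrable_map_measure aestronglyMeasurable_id hA.aemeasurable).mpr hAi
  have hidB : Integrable id μB :=
    (integrable_map_measure aestronglyMeasurable_id hB.aemeasurable).mpr hBi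
  set H : ℝ × ℝ → ℝ := fun p => max (p.1 * (1 + π * (p.2 - b)) - K) 0 with hH
  have hHm : Measurable H := by
    apply Measurable.max _ measurable_const
    exact (measurable_fst.mul
      ((measurable_const.add (((measurable_snd.sub measurable_const)).const_mul π)))).sub
      measurable_const
  have hHi : ∀ (μ : Measure ℝ) [IsProbabilityMeasure μ], Integrable id μ →
      Integrable H (μ.prod ν) := by
    intro μ _ hidμ
    have hg1 : Integrable (fun s : ℝ => 1 + |π| * |s - b|) ν := by
      have : Integrable (fun s : ℝ => s - b) ν := hidν.sub (integrable_const b)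
      exact (integrable_const 1).add (this.abs.const_mul _)
    have hg : Integrable (fun p : ℝ × ℝ => |p.1| * (1 + |π| * |p.2 - b|) + |K|)
        (μ.prod ν) := (Integrable.mul_prod hidμ.abs hg1).add (integrable_const _)
    refine hg.mono' hHm.aestronglyMeasurable (Filter.Eventually.of_forall fun p => ?_)
    have h1 : |H p| ≤ |p.1 * (1 + π * (p.2 - b)) - K| := by
      rw [hH]
      simp only [abs_of_nonneg (le_max_right (p.1 * (1 + π * (p.2 - b)) - K) 0)]
      exact max_le (le_abs_self _) (abs_nonneg _)
    have h2 : |p.1 * (1 + π * (p.2 - b)) - K| ≤ |p.1 * (1 + π * (p.2 - b))| + |K| :=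
      abs_sub _ _
    have h3 : |p.1 * (1 + π * (p.2 - b))| ≤ |p.1| * (1 + |π| * |p.2 - b|) := by
      rw [abs_mul]
      refine mul_le_mul_of_nonneg_left ?_ (abs_nonneg _)
      calc |1 + π * (p.2 - b)| ≤ |(1:ℝ)| + |π * (p.2 - b)| := abs_add_le _ _
        _ = 1 + |π| * |p.2 - b| := by rw [abs_one, abs_mul]
    have : |H p| ≤ |p.1| * (1 + |π| * |p.2 - b|) + |K| := by linarith
    simpa [Real.norm_eq_abs] using this
  have hHiA := hHi μA hidA
  have hHiB := hHi μB hidB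
  have e1 : ∀ (T : Ω → ℝ) (hT : Measurable T), IndepFun T S volume →
      Integrable H (((volume : Measure Ω).map T).prod ν) →
      (∫ ω, max (T ω * (1 + π * (S ω - b)) - K) 0)
        = ∫ s, ∫ a, H (a, s) ∂((volume : Measure Ω).map T) ∂ν := by
    intro T hT hind hTi
    have hmapTS : (volume : Measure Ω).map (fun ω => (T ω, S ω))
        = ((volume : Measure Ω).map T).prod ν :=
      (indepFun_iff_map_prod_eq_prod_map_map hT.aemeasurable hS.aemeasurable).mp hind
    calc (∫ ω, max (T ω * (1 + π * (S ω - b)) - K) 0)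
        = ∫ p, H p ∂((volume : Measure Ω).map (fun ω => (T ω, S ω))) :=
          (integral_map (hT.prodMk hS).aemeasurable hHm.aestronglyMeasurable).symm
      _ = ∫ p, H p ∂(((volume : Measure Ω).map T).prod ν) := by rw [hmapTS]
      _ = ∫ s, ∫ a, H (a, s) ∂((volume : Measure Ω).map T) ∂ν := integral_prod_symm _ hTi
  have hIHlaw : ∀ s : ℝ,
      (∫ a, H (a, s) ∂μA) ≤ ∫ a, H (a, s) ∂μB := by
    intro s
    have hfm : Measurable fun a : ℝ => max (a * (1 + π * (s - b)) - K) 0 :=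
      ((measurable_id.mul_const _).sub measurable_const).max measurable_const
    have hmA : (∫ a, H (a, s) ∂μA) = ∫ ω, max (A ω * (1 + π * (s - b)) - K) 0 := by
      rw [hμA, integral_map hA.aemeasurable hfm.aestronglyMeasurable]
    have hmB : (∫ a, H (a, s) ∂μB) = ∫ ω, max (B ω * (1 + π * (s - b)) - K) 0 := by
      rw [hμB, integral_map hB.aemeasurable hfm.aestronglyMeasurable]
    rw [hmA, hmB]
    exact hIH (1 + π * (s - b)) K
  rw [e1 A hA hindA hHiA, e1 B hB hindB hHiB]
  exact integral_mono hHiA.integral_prod_right hHiB.integral_prod_right hIHlaw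


/-- **Convex order for products of i.i.d. centered returns (Proposition 1).**
Let `(R_i)` be i.i.d. integrable returns with mean `b`, and let `π_M, π_L` have the
same sign with `|π_M| ≤ |π_L|`.  Then the wealths
`X = ∏_{i<N} (1 + π_M (R_i − b))` and `Y = ∏_{i<N} (1 + π_L (R_i − b))`
satisfy `X ≤_C Y`: `E[X] = E[Y]` and `E[(X−K)⁺] ≤ E[(Y−K)⁺]` for all `K`. -/
theorem product_iid_convex_order
    {Ω : Type*} [MeasureSpace Ω] [IsProbabilityMeasure (volume : Measure Ω)]
    (R : ℕ → Ω → ℝ)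
    (hmeas : ∀ i, Measurable (R i))
    (hindep : iIndepFun R volume)
    (hident : ∀ i, IdentDistrib (R i) (R 0) volume volume)
    (hint : Integrable (R 0))
    (b : ℝ) (hb : b = ∫ ω, R 0 ω)
    (πM πL : ℝ) (hsign : 0 ≤ πM * πL) (habs : |πM| ≤ |πL|)
    (N : ℕ) :
    (∫ ω, ∏ i ∈ Finset.range N, (1 + πM * (R i ω - b)))
        = (∫ ω, ∏ i ∈ Finset.range N, (1 + πL * (R i ω - b))) ∧
      ∀ K : ℝ,
        ∫ ω, max ((∏ i ∈ Finset.range N, (1 + πM * (R i ω - b))) - K) 0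
          ≤ ∫ ω, max ((∏ i ∈ Finset.range N, (1 + πL * (R i ω - b))) - K) 0 := by
  have hRint : ∀ i, Integrable (R i) := fun i => (hident i).integrable_iff.mpr hint
  have hRmean : ∀ i, (∫ ω, R i ω) = b := fun i => by
    rw [hb]; exact (hident i).integral_eq
  have hfmeas : ∀ (π : ℝ) i, Measurable fun ω => 1 + π * (R i ω - b) :=
    fun π i => measurable_const.add (((hmeas i).sub measurable_const).const_mul π)
  have hfint : ∀ (π : ℝ) i, Integrable (fun ω => 1 + π * (R i ω - b)) :=
    fun π i => (integrable_const 1).add (((hRint i).sub (integrable_const b)).const_mul π)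
  have hfmean : ∀ (π : ℝ) i, (∫ ω, (1 + π * (R i ω - b))) = 1 := by
    intro π i
    have h2 : Integrable (fun ω => π * (R i ω - b)) (volume : Measure Ω) :=
      ((hRint i).sub (integrable_const b)).const_mul π
    have h3 : Integrable (fun ω => R i ω - b) (volume : Measure Ω) :=
      (hRint i).sub (integrable_const b)
    rw [integral_add (integrable_const 1) h2, integral_const, integral_const_mul,
      integral_sub (hRint i) (integrable_const b), hRmean i, integral_const]
    simp [measure_univ]
  have hFmeas : ∀ (π : ℝ) N, Measurable fun ω => ∏ i ∈ range N, (1 + π * (R i ω - b)) :=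
    fun π N => Finset.measurable_prod _ fun i _ => hfmeas π i
  have hfam : ∀ π : ℝ,
      iIndepFun (fun i ω => 1 + π * (R i ω - b)) volume := by
    intro π
    exact hindep.comp (fun i x => 1 + π * (x - b))
      (fun i => measurable_const.add ((measurable_id.sub measurable_const).const_mul π))
  have hprodfn : ∀ (π : ℝ) (N : ℕ), (∏ j ∈ range N, fun ω => 1 + π * (R j ω - b))
      = fun ω => ∏ i ∈ range N, (1 + π * (R i ω - b)) := by
    intro π N; funext ω; simp
  have hFf_indep : ∀ (π : ℝ) (N : ℕ),
      IndepFun (fun ω => ∏ i ∈ range N, (1 + π * (R i ω - b)))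
        (fun ω => 1 + π * (R N ω - b)) volume := by
    intro π N
    have h := (hfam π).indepFun_prod_range_succ (fun i => hfmeas π i) N
    rwa [hprodfn π N] at h
  have hFint : ∀ (π : ℝ) (N : ℕ),
      Integrable (fun ω => ∏ i ∈ range N, (1 + π * (R i ω - b))) := by
    intro π N
    induction N with
    | zero => simp only [Finset.prod_range_zero]; exact integrable_const (1 : ℝ)
    | succ N ih =>
      have h := (hFf_indep π N).integrable_mul ih (hfint π N)
      have he : ((fun ω => ∏ i ∈ range N, (1 + π * (R i ω - b))) *
          fun ω => 1 + π * (R N ω - b))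
          = fun ω => ∏ i ∈ range (N + 1), (1 + π * (R i ω - b)) := by
        funext ω; simp [Finset.prod_range_succ]
      rwa [he] at h
  have hFmean : ∀ (π : ℝ) (N : ℕ), (∫ ω, ∏ i ∈ range N, (1 + π * (R i ω - b))) = 1 := by
    intro π N
    induction N with
    | zero => simp
    | succ N ih =>
      have hmul := (hFf_indep π N).integral_mul_eq_mul_integral (hFint π N).aestronglyMeasurable
        (hfint π N).aestronglyMeasurable
      have he : ((fun ω => ∏ i ∈ range N, (1 + π * (R i ω - b))) *
          fun ω => 1 + π * (R N ω - b))
          = fun ω => ∏ i ∈ range (N + 1), (1 + π * (R i ω - b)) := by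
        funext ω; simp [Finset.prod_range_succ]
      rw [he] at hmul
      rw [hmul, ih, hfmean, mul_one]
  have hFR_indep : ∀ (π : ℝ) (N : ℕ),
      IndepFun (fun ω => ∏ i ∈ range N, (1 + π * (R i ω - b))) (R N) volume := by
    intro π N
    have hbase := hindep.indepFun_finset (range N) {N}
      (by simp [Finset.disjoint_singleton_right]) hmeas
    set φ : ((i : (range N : Finset ℕ)) → ℝ) → ℝ :=
      fun x => ∏ i : (range N : Finset ℕ), (1 + π * (x i - b)) with hφ
    set ψ : ((i : ({N} : Finset ℕ)) → ℝ) → ℝ :=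
      fun y => y ⟨N, Finset.mem_singleton_self N⟩ with hψ
    have hφm : Measurable φ := Finset.measurable_prod _ fun i _ =>
      by fun_prop
    have hψm : Measurable ψ := measurable_pi_apply _
    have hcomp := hbase.comp hφm hψm
    have h1 : (φ ∘ fun a (i : (range N : Finset ℕ)) => R i a)
        = fun ω => ∏ i ∈ range N, (1 + π * (R i ω - b)) := by
      funext ω
      simp only [Function.comp, hφ]
      exact Finset.prod_coe_sort (range N) (fun i => 1 + π * (R i ω - b))
    have h2 : (ψ ∘ fun a (i : ({N} : Finset ℕ)) => R i a) = R N := rfl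
    rwa [h1, h2] at hcomp
  have key : ∀ (N : ℕ) (c K_ : ℝ),
      (∫ ω, max ((∏ i ∈ range N, (1 + πM * (R i ω - b))) * c - K_) 0)
        ≤ ∫ ω, max ((∏ i ∈ range N, (1 + πL * (R i ω - b))) * c - K_) 0 := by
    intro N
    induction N with
    | zero => intro c K_; simp
    | succ N ih =>
      intro c K_
      have e : ∀ π : ℝ,
          (∫ ω, max ((∏ i ∈ range (N + 1), (1 + π * (R i ω - b))) * c - K_) 0)
            = ∫ ω, max (((∏ i ∈ range N, (1 + π * (R i ω - b))) * c)
                * (1 + π * (R N ω - b)) - K_) 0 := by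
        intro π
        apply integral_congr_ae
        filter_upwards with ω
        congr 1
        rw [Finset.prod_range_succ]; ring
      have hindM : IndepFun (fun ω => (∏ i ∈ range N, (1 + πM * (R i ω - b))) * c)
          (R N) volume :=
        (hFR_indep πM N).comp (measurable_mul_const c) measurable_id
      have hindL : IndepFun (fun ω => (∏ i ∈ range N, (1 + πL * (R i ω - b))) * c)
          (R N) volume :=
        (hFR_indep πL N).comp (measurable_mul_const c) measurable_id
      have hstep1 := aux_step1 ((hFmeas πM N).mul_const c) (hmeas N)
        ((hFint πM N).mul_const c) (hRint N) hindM (hRmean N) hsign habs K_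
      have hstep2 := aux_step2 ((hFmeas πM N).mul_const c) ((hFmeas πL N).mul_const c)
        (hmeas N) ((hFint πM N).mul_const c) ((hFint πL N).mul_const c) (hRint N)
        hindM hindL
        (fun c' K' => by simpa [mul_assoc] using ih (c * c') K') πL b K_
      rw [e πM, e πL]
      exact hstep1.trans hstep2
  refine ⟨(hFmean πM N).trans (hFmean πL N).symm, fun K => ?_⟩
  simpa using key N 1 K
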